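/- Consider maximizing Σ_{i=1}^F f_i · p_i/((1 - A_i)p_i + B_i) over p ∈ [0,1]^F subject to Σ_i p_i ≤ M, where f_i > 0, 0 < A_i ≤ 1, B_i > A_i. This is a concave maximization over a convex set, and any maximizer p* satisfies: there exist ω ≥ 0 and μ_i ≥ 0 with p_i* = min( max( (1/(1-A_i))(-B_i + √(f_i B_i/(ω + μ_i))), 0 ), 1 ) for all i (when A_i < 1), together with complementary slackness conditions ω(Σ_i p_i* - M) = 0 and μ_i(p_i* - 1) = 0. -/

import Mathlib

open Real Set Finset

set_option maxHeartbeats 1000000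

lemma conc_aux (c B x y a b : ℝ) (hc : 0 ≤ c) (hB : 0 < B) (hx : 0 ≤ x) (hy : 0 ≤ y)
    (ha : 0 ≤ a) (hb : 0 ≤ b) (hab : a + b = 1) :
    a * (x / (c * x + B)) + b * (y / (c * y + B)) ≤
      (a * x + b * y) / (c * (a * x + b * y) + B) := by
  have hd1 : 0 < c * x + B := by nlinarith [mul_nonneg hc hx]
  have hd2 : 0 < c * y + B := by nlinarith [mul_nonneg hc hy]
  have hd : 0 < c * (a * x + b * y) + B := by
    nlinarith [mul_nonneg hc (add_nonneg (mul_nonneg ha hx) (mul_nonneg hb hy))]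
  have heq : a * (x / (c * x + B)) + b * (y / (c * y + B))
      = (a * x * (c * y + B) + b * y * (c * x + B)) / ((c * x + B) * (c * y + B)) := by
    field_simp
  rw [heq, div_le_div_iff₀ (by positivity) hd]
  have hb' : b = 1 - a := by linarith
  subst hb'
  nlinarith [mul_nonneg (mul_nonneg (mul_nonneg (mul_nonneg ha (by linarith : (0:ℝ) ≤ 1 - a)) hc) hB.le) (sq_nonneg (x - y))]

/-- Problem P3: maximizing Σ_i f_i p_i/((1-A_i)p_i + B_i) over [0,1]^F with
Σ_i p_i ≤ M is a concave maximization over a convex set, and any maximizer p*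
admits KKT multipliers ω ≥ 0, μ_i ≥ 0 with the closed-form expression
p_i* = min(max((1/(1-A_i))(-B_i + √(f_i B_i/(ω+μ_i))), 0), 1) whenever A_i < 1,
together with complementary slackness. -/
theorem P3_kkt_characterization (F : ℕ) (M : ℝ) (hM0 : 0 < M) (hMF : M ≤ F)
    (f A B : Fin F → ℝ) (hf : ∀ i, 0 < f i)
    (hA0 : ∀ i, 0 < A i) (hA1 : ∀ i, A i ≤ 1) (hBA : ∀ i, A i < B i) :
    letI S : Set (Fin F → ℝ) :=
      {q : Fin F → ℝ | (∀ i, q i ∈ Icc (0:ℝ) 1) ∧ ∑ i, q i ≤ M}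
    letI obj : (Fin F → ℝ) → ℝ :=
      fun q => ∑ i, f i * (q i / ((1 - A i) * q i + B i))
    Convex ℝ S ∧ ConcaveOn ℝ S obj ∧
    (∀ p : Fin F → ℝ, p ∈ S → IsMaxOn obj S p →
      ∃ ω : ℝ, ∃ μ : Fin F → ℝ, 0 ≤ ω ∧ (∀ i, 0 ≤ μ i) ∧
        (∀ i, A i < 1 →
          p i = min (max ((1 / (1 - A i)) *
            (-B i + Real.sqrt (f i * B i / (ω + μ i)))) 0) 1) ∧
        ω * (∑ i, p i - M) = 0 ∧
        (∀ i, μ i * (p i - 1) = 0)) := by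
  have hB0 : ∀ k, 0 < B k := fun k => (hA0 k).trans (hBA k)
  have hc0 : ∀ k, 0 ≤ 1 - A k := fun k => by linarith [hA1 k]
  -- Convexity of S
  have hconv : Convex ℝ {q : Fin F → ℝ | (∀ i, q i ∈ Icc (0:ℝ) 1) ∧ ∑ i, q i ≤ M} := by
    intro x hx y hy a b ha hb hab
    obtain ⟨hx1, hx2⟩ := hx
    obtain ⟨hy1, hy2⟩ := hy
    refine ⟨?_, ?_⟩
    · intro i
      have h1 := (hx1 i).1; have h2 := (hx1 i).2
      have h3 := (hy1 i).1; have h4 := (hy1 i).2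
      constructor
      · simp only [Pi.add_apply, Pi.smul_apply, smul_eq_mul]
        nlinarith
      · simp only [Pi.add_apply, Pi.smul_apply, smul_eq_mul]
        nlinarith
    · simp only [Pi.add_apply, Pi.smul_apply, smul_eq_mul]
      rw [Finset.sum_add_distrib, ← Finset.mul_sum, ← Finset.mul_sum]
      nlinarith
  refine ⟨hconv, ?_, ?_⟩
  -- Concavity of obj
  · refine ⟨hconv, ?_⟩
    intro x hx y hy a b ha hb hab
    simp only [smul_eq_mul]
    rw [Finset.mul_sum, Finset.mul_sum, ← Finset.sum_add_distrib]
    apply Finset.sum_le_sum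
    intro i _
    have key := conc_aux (1 - A i) (B i) (x i) (y i) a b (hc0 i) (hB0 i)
      (hx.1 i).1 (hy.1 i).1 ha hb hab
    have : (a • x + b • y) i = a * x i + b * y i := by
      simp [Pi.add_apply, Pi.smul_apply, smul_eq_mul]
    rw [this]
    calc a * (f i * (x i / ((1 - A i) * x i + B i)))
          + b * (f i * (y i / ((1 - A i) * y i + B i)))
        = f i * (a * (x i / ((1 - A i) * x i + B i))
            + b * (y i / ((1 - A i) * y i + B i))) := by ring
      _ ≤ f i * ((a * x i + b * y i) / ((1 - A i) * (a * x i + b * y i) + B i)) :=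
          mul_le_mul_of_nonneg_left key (hf i).le
  -- KKT part
  set obj : (Fin F → ℝ) → ℝ := fun q => ∑ i, f i * (q i / ((1 - A i) * q i + B i))
    with hobj_def
  intro p hp hmax
  obtain ⟨hp1, hp2⟩ := hp
  set d : Fin F → ℝ := fun k => (1 - A k) * p k + B k with hd_def
  have hd0 : ∀ k, 0 < d k := by
    intro k
    have := mul_nonneg (hc0 k) (hp1 k).1
    simp only [hd_def]
    nlinarith [hB0 k]
  set D : Fin F → ℝ := fun k => f k * B k / (d k) ^ 2 with hD_def
  have hD0 : ∀ k, 0 < D k := fun k => div_pos (mul_pos (hf k) (hB0 k)) (pow_pos (hd0 k) 2)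
  -- the objective increases when we raise one coordinate
  -- first: sum of p equals M
  have hsum : ∑ i, p i = M := by
    by_contra hne
    have hlt : ∑ i, p i < M := lt_of_le_of_ne hp2 hne
    have hex : ∃ i, p i < 1 := by
      by_contra hall
      push_neg at hall
      have : ∀ i, p i = 1 := fun i => le_antisymm (hp1 i).2 (hall i)
      have hs : ∑ i, p i = (F : ℝ) := by
        simp [this]
      rw [hs] at hlt
      linarith
    obtain ⟨i, hi⟩ := hex
    set ε : ℝ := min (1 - p i) (M - ∑ i, p i) with hε_def
    have hε0 : 0 < ε := lt_min (by linarith) (by linarith)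
    set q : Fin F → ℝ := fun k => if k = i then p i + ε else p k with hq_def
    have hqS : q ∈ {q : Fin F → ℝ | (∀ i, q i ∈ Icc (0:ℝ) 1) ∧ ∑ i, q i ≤ M} := by
      refine ⟨?_, ?_⟩
      · intro k
        by_cases hk : k = i
        · subst hk
          simp only [hq_def, if_pos rfl]
          constructor
          · linarith [(hp1 k).1]
          · have := min_le_left (1 - p k) (M - ∑ i, p i)
            simp only [hε_def] at *
            linarith
        · simp only [hq_def, if_neg hk]
          exact hp1 k
      · have hqsum : ∑ k, q k = (∑ k, p k) + ε := by
          have : ∀ k, q k = p k + (if k = i then ε else 0) := by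
            intro k
            by_cases hk : k = i <;> simp [hq_def, hk]
          rw [Finset.sum_congr rfl (fun k _ => this k), Finset.sum_add_distrib,
            Finset.sum_ite_eq' Finset.univ i (fun _ => ε)]
          simp
        rw [hqsum]
        have := min_le_right (1 - p i) (M - ∑ i, p i)
        simp only [hε_def] at *
        linarith
    have hle : obj q ≤ obj p := hmax hqS
    have hdiff : obj q - obj p
        = f i * (q i / ((1 - A i) * q i + B i)) - f i * (p i / ((1 - A i) * p i + B i)) := by
      simp only [hobj_def]
      rw [← Finset.sum_sub_distrib]
      rw [Finset.sum_eq_single i]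
      · intro k _ hk
        simp [hq_def, hk]
      · intro h; exact absurd (Finset.mem_univ i) h
    have hqi : q i = p i + ε := by simp [hq_def]
    have hei : 0 < (1 - A i) * (p i + ε) + B i := by
      nlinarith [mul_nonneg (hc0 i) (add_nonneg (hp1 i).1 hε0.le), hB0 i]
    have hpos : 0 < obj q - obj p := by
      rw [hdiff, hqi]
      have hdi : 0 < (1 - A i) * p i + B i := hd0 i
      have : f i * ((p i + ε) / ((1 - A i) * (p i + ε) + B i))
          - f i * (p i / ((1 - A i) * p i + B i))
          = f i * B i * ε / (((1 - A i) * p i + B i) * ((1 - A i) * (p i + ε) + B i)) := by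
        rw [mul_div_assoc', mul_div_assoc', div_sub_div _ _ hei.ne' hdi.ne', div_eq_div_iff (mul_ne_zero hei.ne' hdi.ne') (mul_ne_zero hdi.ne' hei.ne')]
        ring
      rw [this]
      exact div_pos (mul_pos (mul_pos (hf i) (hB0 i)) hε0) (mul_pos hdi hei)
    linarith
  -- exchange lemma
  have key : ∀ i j, i ≠ j → p i < 1 → 0 < p j → D i ≤ D j := by
    intro i j hij hpi hpj
    by_contra hcon
    push_neg at hcon
    -- hcon : D j < D i, i.e. f j B j / d j ^2 < f i B i / d i ^ 2
    have hG : 0 < f i * B i * (d j) ^ 2 - f j * B j * (d i) ^ 2 := by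
      have := (div_lt_div_iff₀ (pow_pos (hd0 j) 2) (pow_pos (hd0 i) 2)).1 hcon
      nlinarith
    set G : ℝ := f i * B i * (d j) ^ 2 - f j * B j * (d i) ^ 2 with hG_def
    set K : ℝ := f i * B i * d j * (1 - A j) + f j * B j * d i * (1 - A i) with hK_def
    have hK0 : 0 ≤ K := by
      have h1 : 0 ≤ f i * B i * d j * (1 - A j) :=
        mul_nonneg (mul_nonneg (mul_nonneg (hf i).le (hB0 i).le) (hd0 j).le) (hc0 j)
      have h2 : 0 ≤ f j * B j * d i * (1 - A i) :=
        mul_nonneg (mul_nonneg (mul_nonneg (hf j).le (hB0 j).le) (hd0 i).le) (hc0 i)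
      simp only [hK_def]; linarith
    set ε : ℝ := min (min (1 - p i) (p j)) (G / (K + 1)) with hε_def
    have hε0 : 0 < ε := lt_min (lt_min (by linarith) hpj) (div_pos hG (by linarith))
    have hε1 : ε ≤ 1 - p i := (min_le_left _ _).trans (min_le_left _ _) |>.trans_eq rfl
    have hε2 : ε ≤ p j := le_trans (min_le_left _ _) (min_le_right _ _)
    have hε3 : ε ≤ G / (K + 1) := min_le_right _ _
    set q : Fin F → ℝ := fun k => if k = i then p i + ε else if k = j then p j - ε else p k
      with hq_def
    have hqi : q i = p i + ε := by simp [hq_def]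
    have hqj : q j = p j - ε := by simp [hq_def, hij.symm]
    have hqS : q ∈ {q : Fin F → ℝ | (∀ i, q i ∈ Icc (0:ℝ) 1) ∧ ∑ i, q i ≤ M} := by
      refine ⟨?_, ?_⟩
      · intro k
        by_cases hk : k = i
        · subst hk; rw [hqi]; exact ⟨by linarith [(hp1 k).1], by linarith⟩
        by_cases hk' : k = j
        · subst hk'; rw [hqj]; exact ⟨by linarith, by linarith [(hp1 k).2]⟩
        · simp only [hq_def, if_neg hk, if_neg hk']; exact hp1 k
      · have hqsum : ∑ k, q k = ∑ k, p k := by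
          have : ∀ k, q k = p k + ((if k = i then ε else 0) - (if k = j then ε else 0)) := by
            intro k
            by_cases hk : k = i
            · subst hk; simp [hq_def, hij]
            by_cases hk' : k = j
            · subst hk'; simp [hq_def, hk, sub_eq_add_neg]
            · simp [hq_def, hk, hk']
          rw [Finset.sum_congr rfl (fun k _ => this k), Finset.sum_add_distrib,
            Finset.sum_sub_distrib, Finset.sum_ite_eq' Finset.univ i (fun _ => ε),
            Finset.sum_ite_eq' Finset.univ j (fun _ => ε)]
          simp
        rw [hqsum]; exact hp2
    have hle : obj q ≤ obj p := hmax hqS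
    have hdiff : obj q - obj p
        = (f i * (q i / ((1 - A i) * q i + B i)) - f i * (p i / ((1 - A i) * p i + B i)))
        + (f j * (q j / ((1 - A j) * q j + B j)) - f j * (p j / ((1 - A j) * p j + B j))) := by
      simp only [hobj_def]
      rw [← Finset.sum_sub_distrib]
      rw [Finset.sum_eq_add i j hij]
      · intro k _ hk
        simp [hq_def, hk.1, hk.2]
      · intro h; exact absurd (Finset.mem_univ i) h
      · intro h; exact absurd (Finset.mem_univ j) h
    set ei : ℝ := (1 - A i) * (p i + ε) + B i with hei_def
    set ej : ℝ := (1 - A j) * (p j - ε) + B j with hej_def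
    have hei0 : 0 < ei := by
      have := mul_nonneg (hc0 i) (add_nonneg (hp1 i).1 hε0.le)
      simp only [hei_def]; nlinarith [hB0 i]
    have hej0 : 0 < ej := by
      have := mul_nonneg (hc0 j) (by linarith : (0:ℝ) ≤ p j - ε)
      simp only [hej_def]; nlinarith [hB0 j]
    have hdiff2 : obj q - obj p
        = f i * B i * ε / (d i * ei) - f j * B j * ε / (ej * d j) := by
      rw [hdiff, hqi, hqj]
      have hdi := hd0 i
      have hdj := hd0 j
      have e1 : f i * ((p i + ε) / ((1 - A i) * (p i + ε) + B i))
          - f i * (p i / ((1 - A i) * p i + B i)) = f i * B i * ε / (d i * ei) := by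
        simp only [hei_def, hd_def]
        have h1 : (1 - A i) * (p i + ε) + B i ≠ 0 := by simp only [hei_def] at hei0; linarith
        have h2 : (1 - A i) * p i + B i ≠ 0 := by positivity
        rw [mul_div_assoc', mul_div_assoc', div_sub_div _ _ h1 h2, div_eq_div_iff (mul_ne_zero h1 h2) (mul_ne_zero h2 h1)]
        ring
      have e2 : f j * ((p j - ε) / ((1 - A j) * (p j - ε) + B j))
          - f j * (p j / ((1 - A j) * p j + B j)) = -(f j * B j * ε / (ej * d j)) := by
        simp only [hej_def, hd_def]
        have h1 : (1 - A j) * (p j - ε) + B j ≠ 0 := by simp only [hej_def] at hej0; linarith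
        have h2 : (1 - A j) * p j + B j ≠ 0 := by positivity
        rw [mul_div_assoc', mul_div_assoc', div_sub_div _ _ h1 h2, ← neg_div, div_eq_div_iff (mul_ne_zero h1 h2) (mul_ne_zero h1 h2)]
        ring
      rw [e1]
      rw [e2]
      ring
    have hineq : f i * B i * ε / (d i * ei) ≤ f j * B j * ε / (ej * d j) := by
      have := hle
      have h := hdiff2
      nlinarith [hdiff2, hle]
    rw [div_le_div_iff₀ (mul_pos (hd0 i) hei0) (mul_pos hej0 (hd0 j))] at hineq
    -- f i B i ε (ej d j) ≤ f j B j ε (d i ei)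
    have hineq2 : f i * B i * (ej * d j) ≤ f j * B j * (d i * ei) := by
      have h := hineq
      nlinarith [hε0]
    -- substitute ei, ej : get G ≤ ε K
    have hGK : G ≤ ε * K := by
      have hejd : ((1 - A j) * (p j - ε) + B j) = d j - (1 - A j) * ε := by
        simp only [hd_def]; ring
      have heid : ((1 - A i) * (p i + ε) + B i) = d i + (1 - A i) * ε := by
        simp only [hd_def]; ring
      simp only [hei_def, hej_def] at hineq2
      rw [hejd, heid] at hineq2
      simp only [hG_def, hK_def]
      nlinarith [hineq2]
    have : ε * (K + 1) ≤ G := by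
      rw [← le_div_iff₀ (by linarith : (0:ℝ) < K + 1)]
      exact hε3
    nlinarith [hε0]
  -- existence of a positive coordinate
  have hexpos : ∃ j, 0 < p j := by
    by_contra hall
    push_neg at hall
    have : ∑ i, p i ≤ 0 := Finset.sum_nonpos (fun i _ => hall i)
    rw [hsum] at this
    linarith
  set s : Finset (Fin F) := Finset.univ.filter (fun j => 0 < p j) with hs_def
  have hs_ne : s.Nonempty := by
    obtain ⟨j, hj⟩ := hexpos
    exact ⟨j, by simp [hs_def, hj]⟩
  set ω : ℝ := s.inf' hs_ne D with hω_def
  obtain ⟨j0, hj0s, hωeq⟩ := Finset.exists_mem_eq_inf' hs_ne D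
  have hpj0 : 0 < p j0 := by
    simp only [hs_def, Finset.mem_filter] at hj0s
    exact hj0s.2
  have hω0 : 0 < ω := by rw [hω_def, hωeq]; exact hD0 j0
  have hωle : ∀ i, 0 < p i → ω ≤ D i := by
    intro i hi
    exact Finset.inf'_le D (by simp [hs_def, hi])
  have hωge : ∀ i, p i < 1 → D i ≤ ω := by
    intro i hi
    rw [hω_def, hωeq]
    by_cases hij : i = j0
    · subst hij; exact le_rfl
    · exact key i j0 hij hi hpj0
  set μ : Fin F → ℝ := fun k => if p k = 1 then D k - ω else 0 with hμ_def
  have hμ0 : ∀ i, 0 ≤ μ i := by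
    intro i
    simp only [hμ_def]
    by_cases h : p i = 1
    · rw [if_pos h]
      have : 0 < p i := by rw [h]; norm_num
      linarith [hωle i this]
    · rw [if_neg h]
  refine ⟨ω, μ, hω0.le, hμ0, ?_, ?_, ?_⟩
  · -- formula
    intro i hAi
    have hc : 0 < 1 - A i := by linarith
    by_cases hpos : 0 < p i
    · -- ω + μ i = D i, expression equals p i
      have hωμ : ω + μ i = D i := by
        by_cases h1 : p i = 1
        · simp only [hμ_def, if_pos h1]; ring
        · have hlt : p i < 1 := lt_of_le_of_ne (hp1 i).2 h1
          simp only [hμ_def, if_neg h1]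
          have := hωle i hpos
          have := hωge i hlt
          linarith
      rw [hωμ]
      have hfB : f i * B i / D i = (d i) ^ 2 := by
        simp only [hD_def]
        rw [div_div_eq_mul_div, mul_comm (f i * B i) (d i ^ 2), mul_div_assoc,
          div_self (mul_pos (hf i) (hB0 i)).ne', mul_one]
      rw [hfB, Real.sqrt_sq (hd0 i).le]
      have hx : (1 / (1 - A i)) * (-B i + d i) = p i := by
        simp only [hd_def]
        field_simp
        ring
      rw [hx, max_eq_left (hp1 i).1, min_eq_left (hp1 i).2]
    · -- p i = 0
      push_neg at hpos
      have hpi0 : p i = 0 := le_antisymm hpos (hp1 i).1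
      have hμi : μ i = 0 := by
        simp only [hμ_def]
        rw [if_neg]; rw [hpi0]; norm_num
      rw [hμi, add_zero]
      have hDi : D i = f i * B i / (B i) ^ 2 := by
        simp only [hD_def, hd_def, hpi0]; ring_nf
      have hωD : D i ≤ ω := hωge i (by rw [hpi0]; norm_num)
      have hle2 : f i * B i / ω ≤ (B i) ^ 2 := by
        rw [div_le_iff₀ hω0]
        have : f i * B i / (B i) ^ 2 ≤ ω := by rw [← hDi]; exact hωD
        rw [div_le_iff₀ (pow_pos (hB0 i) 2)] at this
        nlinarith
      have hsq : Real.sqrt (f i * B i / ω) ≤ B i := by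
        calc Real.sqrt (f i * B i / ω) ≤ Real.sqrt ((B i)^2) := Real.sqrt_le_sqrt hle2
          _ = B i := Real.sqrt_sq (hB0 i).le
      have hxle : (1 / (1 - A i)) * (-B i + Real.sqrt (f i * B i / ω)) ≤ 0 := by
        apply mul_nonpos_of_nonneg_of_nonpos
        · exact (div_pos one_pos hc).le
        · linarith
      rw [max_eq_right hxle, hpi0, min_eq_left (by norm_num : (0:ℝ) ≤ 1)]
  · rw [hsum]; ring
  · intro i
    simp only [hμ_def]
    by_cases h : p i = 1
    · rw [h]; ring_nf
    · rw [if_neg h]; ring
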